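/- Let r ≥ 1 and let G₁ be a group. Let G be the free product of the constant family of groups Gᵢ = G₁ indexed by ℤ/rℤ, with canonical inclusions ιᵢ : G₁ → G, and let f be an automorphism of G such that f(ιᵢ(G₁)) = ι_{i+1}(G₁) for all i ∈ ℤ/rℤ, so that f^r maps ι₀(G₁) onto itself and induces an automorphism φ of G₁ with f^r(ι₀(g)) = ι₀(φ(g)) for all g ∈ G₁. Then the map of the abelianization Gᵃᵇ to itself sending x to f_ab(x)·x⁻¹ is bijective if and only if the map of G₁ᵃᵇ to itself sending x to φ_ab(x)·x⁻¹ is bijective. -/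

import Mathlib

section core
variable {B : Type*} [CommGroup B]

/-- Composition `g (n-1) ∘ ... ∘ g 0`. -/
def Gcomp {r : ℕ} (g : ZMod r → (B →* B)) : ℕ → (B →* B)
  | 0 => MonoidHom.id B
  | n+1 => (g (n : ZMod r)).comp (Gcomp g n)

lemma core_lemma (s : ℕ) (g : ZMod (s+1) → (B →* B))
    (T : (ZMod (s+1) → B) →* (ZMod (s+1) → B))
    (hT : ∀ (x : ZMod (s+1) → B) (j : ZMod (s+1)), T x j = g (j-1) (x (j-1))) :
    Function.Bijective (fun x : ZMod (s+1) → B => T x * x⁻¹)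
      ↔ Function.Bijective (fun b : B => Gcomp g (s+1) b * b⁻¹) := by
  have hval : ∀ j : ZMod (s+1), ((j.val : ℕ) : ZMod (s+1)) = j := fun j =>
    ZMod.natCast_rightInverse j
  have hneg1 : ((s : ℕ) : ZMod (s+1)) = -1 := by
    have h : ((s+1 : ℕ) : ZMod (s+1)) = 0 := ZMod.natCast_self _
    push_cast at h
    linear_combination h
  constructor
  · rintro ⟨hinj, hsurj⟩
    constructor
    · -- injectivity of b ↦ Gcomp g (s+1) b * b⁻¹
      intro b b' hb
      simp only at hb
      set c := b / b' with hcdef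
      have hc : Gcomp g (s+1) c = c := by
        have h2 : Gcomp g (s+1) b = Gcomp g (s+1) b' * b'⁻¹ * b := by
          rw [← hb]; group
        rw [hcdef, map_div, h2, mul_assoc, mul_div_cancel_left, inv_mul_eq_div]
      set x : ZMod (s+1) → B := fun j => Gcomp g j.val c with hxdef
      have hTx : T x = x := by
        funext j
        rw [hT]
        rcases eq_or_ne j 0 with rfl | hj
        · show g (0-1) (Gcomp g (0-1 : ZMod (s+1)).val c) = Gcomp g (0:ZMod (s+1)).val c
          rw [zero_sub, ZMod.val_neg_one, ZMod.val_zero]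
          have h3 : g (-1 : ZMod (s+1)) (Gcomp g s c) = Gcomp g (s+1) c := by
            rw [← hneg1]; rfl
          rw [h3, hc]; rfl
        · show g (j-1) (Gcomp g (j-1 : ZMod (s+1)).val c) = Gcomp g j.val c
          have hv : j.val ≠ 0 := fun h => hj (by rw [← hval j, h]; simp)
          obtain ⟨n, hn⟩ : ∃ n, j.val = n + 1 := ⟨j.val - 1, by omega⟩
          have hj1 : (j - 1 : ZMod (s+1)) = (n : ℕ) := by
            rw [← hval j, hn]; push_cast; ring
          have hnv : ((n : ℕ) : ZMod (s+1)).val = n := by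
            apply ZMod.val_cast_of_lt
            have := j.val_lt; omega
          rw [hj1, hnv, hn]
          rfl
      have hx1 : x = 1 := by
        apply hinj
        show T x * x⁻¹ = T 1 * 1⁻¹
        rw [hTx, map_one]; simp
      have hx0 : x 0 = 1 := by rw [hx1]; rfl
      have hc1 : c = 1 := by
        simpa [hxdef, ZMod.val_zero, Gcomp] using hx0
      rwa [hcdef, div_eq_one] at hc1
    · -- surjectivity
      intro c
      obtain ⟨x, hx⟩ := hsurj (Pi.mulSingle 0 c)
      simp only at hx
      have hrel : ∀ j, g (j-1) (x (j-1)) * (x j)⁻¹ = Pi.mulSingle (M := fun _ : ZMod (s+1) => B) 0 c j := by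
        intro j
        rw [← hT]
        exact congrFun hx j
      have key : ∀ n : ℕ, n < s + 1 → x ((n : ℕ) : ZMod (s+1)) = Gcomp g n (x 0) := by
        intro n
        induction n with
        | zero => intro _; simp [Gcomp]
        | succ n ih =>
          intro hlt
          have hj0 : ((n+1 : ℕ) : ZMod (s+1)) ≠ 0 := by
            intro h
            have h4 := ZMod.val_cast_of_lt hlt
            rw [h, ZMod.val_zero] at h4
            omega
          have h1 : ((n+1 : ℕ) : ZMod (s+1)) - 1 = (n : ℕ) := by push_cast; ring
          have h5 := hrel ((n+1 : ℕ) : ZMod (s+1))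
          rw [Pi.mulSingle_eq_of_ne hj0, h1, ih (by omega)] at h5
          have h6 := mul_inv_eq_one.mp h5
          rw [← h6]
          rfl
      refine ⟨x 0, ?_⟩
      have h7 := hrel 0
      rw [Pi.mulSingle_eq_same, zero_sub, ← hneg1, key s (by omega)] at h7
      exact h7
  · rintro ⟨hinj, hsurj⟩
    constructor
    · intro x x' hx
      simp only at hx
      set z := x / x' with hzdef
      have hz : T z = z := by
        have h8 : T x / x = T x' / x' := by
          rw [div_eq_mul_inv, div_eq_mul_inv, hx]
        have h2 : T z / z = 1 := by
          rw [hzdef, map_div, div_div_div_comm, h8, div_self']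
        rwa [div_eq_one] at h2
      have key : ∀ n : ℕ, z ((n : ℕ) : ZMod (s+1)) = Gcomp g n (z 0) := by
        intro n
        induction n with
        | zero => simp [Gcomp]
        | succ n ih =>
          have h1 : ((n+1 : ℕ) : ZMod (s+1)) - 1 = (n : ℕ) := by push_cast; ring
          have h9 := congrFun hz.symm ((n+1 : ℕ) : ZMod (s+1))
          rw [hT, h1, ih] at h9
          rw [h9]; rfl
      have hz0 : z 0 = 1 := by
        apply hinj
        show Gcomp g (s+1) (z 0) * (z 0)⁻¹ = Gcomp g (s+1) 1 * 1⁻¹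
        have h10 := key (s+1)
        rw [ZMod.natCast_self] at h10
        rw [← h10]
        simp
      have hz1 : z = 1 := by
        funext j
        have h11 := key j.val
        rw [hval] at h11
        rw [h11, hz0, map_one]; rfl
      rwa [hzdef, div_eq_one] at hz1
    · intro y
      -- correction terms
      set d : ℕ → B := fun n => Nat.rec 1 (fun n dn => g (n : ZMod (s+1)) dn * (y ((n+1 : ℕ) : ZMod (s+1)))⁻¹) n with hddef
      have hd0 : d 0 = 1 := rfl
      have hdsucc : ∀ n, d (n+1) = g ((n : ℕ) : ZMod (s+1)) (d n) * (y ((n+1 : ℕ) : ZMod (s+1)))⁻¹ := fun n => rfl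
      obtain ⟨b, hb⟩ := hsurj (d (s+1))⁻¹
      simp only at hb
      refine ⟨fun j => Gcomp g j.val b * d j.val, ?_⟩
      funext j
      show T _ j * (_)⁻¹ = y j
      rw [hT]
      rcases eq_or_ne j 0 with rfl | hj
      · show g (0-1) (Gcomp g (0-1 : ZMod (s+1)).val b * d (0-1 : ZMod (s+1)).val) * (Gcomp g (0:ZMod (s+1)).val b * d (0:ZMod (s+1)).val)⁻¹ = y 0
        rw [zero_sub, ZMod.val_neg_one, ZMod.val_zero, hd0, map_mul]
        have e1 : g (-1 : ZMod (s+1)) (Gcomp g s b) = Gcomp g (s+1) b := by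
          rw [← hneg1]; rfl
        have e2 : g (-1 : ZMod (s+1)) (d s) = d (s+1) * y 0 := by
          rw [← hneg1]
          have h12 := hdsucc s
          have h0 : ((s+1 : ℕ) : ZMod (s+1)) = 0 := ZMod.natCast_self _
          rw [h0] at h12
          rw [h12]
          group
        rw [e1, e2]
        have hGb : Gcomp g (s+1) b = (d (s+1))⁻¹ * b := by
          rw [← hb]
          group
        rw [hGb]
        have h13 : Gcomp g 0 b = b := rfl
        rw [h13]
        simp [mul_comm, mul_left_comm, mul_assoc]
      · have hv : j.val ≠ 0 := fun h => hj (by rw [← hval j, h]; simp)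
        obtain ⟨n, hn⟩ : ∃ n, j.val = n + 1 := ⟨j.val - 1, by omega⟩
        have hj1 : (j - 1 : ZMod (s+1)) = (n : ℕ) := by
          rw [← hval j, hn]; push_cast; ring
        have hnv : ((n : ℕ) : ZMod (s+1)).val = n := by
          apply ZMod.val_cast_of_lt
          have := j.val_lt; omega
        have hyj : y j = y ((n+1 : ℕ) : ZMod (s+1)) := by
          rw [← hval j, hn]
        show g (j-1) (Gcomp g (j-1 : ZMod (s+1)).val b * d (j-1 : ZMod (s+1)).val) * (Gcomp g j.val b * d j.val)⁻¹ = y j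
        rw [hj1, hnv, map_mul, hn]
        have e1 : g ((n:ℕ) : ZMod (s+1)) (Gcomp g n b) = Gcomp g (n+1) b := rfl
        rw [e1, hdsucc, hyj]
        simp [mul_comm, mul_left_comm, mul_assoc]

end core

lemma conj_bij {α β : Type*} (e : α ≃ β) (u : α → α) :
    Function.Bijective (⇑e ∘ u ∘ ⇑e.symm) ↔ Function.Bijective u := by
  constructor
  · intro h
    have h2 := (e.symm.bijective.comp h).comp e.bijective
    have h3 : (⇑e.symm ∘ ⇑e ∘ u ∘ ⇑e.symm) ∘ ⇑e = u := by
      funext x; simp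
    rwa [h3] at h2
  · intro h
    exact (e.bijective.comp h).comp e.symm.bijective




/-- With the same setup as Statement 0, the endomorphism `x ↦ f_ab x * x⁻¹` of the
abelianization of `G` is bijective if and only if the endomorphism `x ↦ φ_ab x * x⁻¹` of the
abelianization of `G₁` is bijective. -/
theorem stmt_2 (r : ℕ) (hr : 1 ≤ r) (G₁ : Type*) [Group G₁]
    (f : MulAut (Monoid.CoprodI (fun _ : ZMod r => G₁)))
    (hf : ∀ i : ZMod r,
      Subgroup.map f.toMonoidHom
        (MonoidHom.range (Monoid.CoprodI.of (M := fun _ : ZMod r => G₁) (i := i))) =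
      MonoidHom.range (Monoid.CoprodI.of (M := fun _ : ZMod r => G₁) (i := i + 1)))
    (φ : MulAut G₁)
    (hφ : ∀ g : G₁,
      (f ^ r) (Monoid.CoprodI.of (M := fun _ : ZMod r => G₁) (i := (0 : ZMod r)) g) =
        Monoid.CoprodI.of (M := fun _ : ZMod r => G₁) (i := (0 : ZMod r)) (φ g)) :
    Function.Bijective
        (fun x : Abelianization (Monoid.CoprodI (fun _ : ZMod r => G₁)) =>
          Abelianization.map f.toMonoidHom x * x⁻¹)
      ↔ Function.Bijective
        (fun x : Abelianization G₁ => Abelianization.map φ.toMonoidHom x * x⁻¹) := by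
  obtain ⟨s, rfl⟩ : ∃ s, r = s + 1 := ⟨r - 1, by omega⟩
  set B := Abelianization G₁ with hB
  set GG := Monoid.CoprodI (fun _ : ZMod (s+1) => G₁) with hGG
  set A := Abelianization GG with hA
  set F : A →* A := Abelianization.map f.toMonoidHom with hF
  -- the two structure maps
  set toP : A →* (ZMod (s+1) → B) :=
    Abelianization.lift (Monoid.CoprodI.lift
      (fun i => (MonoidHom.mulSingle (fun _ : ZMod (s+1) => B) i).comp Abelianization.of))
    with htoP
  set toA : (ZMod (s+1) → B) →* A :=
    ∏ i : ZMod (s+1),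
      (Abelianization.map (Monoid.CoprodI.of (M := fun _ : ZMod (s+1) => G₁) (i := i))).comp
        (Pi.evalMonoidHom (fun _ : ZMod (s+1) => B) i)
    with htoA
  have lemA : ∀ (i : ZMod (s+1)) (gg : G₁),
      toP (Abelianization.of (Monoid.CoprodI.of (M := fun _ : ZMod (s+1) => G₁) (i := i) gg)) =
        Pi.mulSingle i (Abelianization.of gg) := by
    intro i gg
    rw [htoP]
    rw [Abelianization.lift_apply_of, Monoid.CoprodI.lift_of]
    rfl
  have lemB : ∀ (i : ZMod (s+1)) (b : B),
      toA (Pi.mulSingle i b) =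
        Abelianization.map (Monoid.CoprodI.of (M := fun _ : ZMod (s+1) => G₁) (i := i)) b := by
    intro i b
    rw [htoA, MonoidHom.finset_prod_apply]
    rw [Fintype.prod_eq_single i]
    · simp
    · intro j hj
      simp [Pi.mulSingle_eq_of_ne hj]
  have invAP : ∀ a : A, toA (toP a) = a := by
    have : toA.comp toP = MonoidHom.id A := by
      apply Abelianization.hom_ext
      apply Monoid.CoprodI.ext_hom
      intro i
      ext gg
      simp only [MonoidHom.coe_comp, Function.comp_apply, MonoidHom.id_apply]
      rw [lemA, lemB, Abelianization.map_of]
      rfl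
    intro a
    exact DFunLike.congr_fun this a
  have lemC : ∀ i : ZMod (s+1),
      toP.comp (Abelianization.map (Monoid.CoprodI.of (M := fun _ : ZMod (s+1) => G₁) (i := i))) =
        MonoidHom.mulSingle (fun _ : ZMod (s+1) => B) i := by
    intro i
    apply Abelianization.hom_ext
    ext gg
    simp only [MonoidHom.coe_comp, Function.comp_apply]
    rw [Abelianization.map_of, lemA]
    rfl
  have invPA : ∀ p : ZMod (s+1) → B, toP (toA p) = p := by
    have : toP.comp toA = MonoidHom.id _ := by
      apply MonoidHom.functions_ext
      intro i b
      simp only [MonoidHom.coe_comp, Function.comp_apply, MonoidHom.id_apply]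
      rw [lemB]
      exact DFunLike.congr_fun (lemC i) b
    intro p
    exact DFunLike.congr_fun this p
  set T : (ZMod (s+1) → B) →* (ZMod (s+1) → B) := (toP.comp F).comp toA with hTdef
  set g : ZMod (s+1) → (B →* B) := fun i =>
    (Pi.evalMonoidHom (fun _ : ZMod (s+1) => B) (i+1)).comp
      (T.comp (MonoidHom.mulSingle (fun _ : ZMod (s+1) => B) i)) with hgdef
  have hTsingle : ∀ (i : ZMod (s+1)) (b : B),
      T (Pi.mulSingle i b) = Pi.mulSingle (i+1) (g i b) := by
    intro i b
    have hh : T.comp (MonoidHom.mulSingle (fun _ : ZMod (s+1) => B) i) =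
        (MonoidHom.mulSingle (fun _ : ZMod (s+1) => B) (i+1)).comp (g i) := by
      apply Abelianization.hom_ext
      ext gg
      simp only [MonoidHom.coe_comp, Function.comp_apply]
      -- compute LHS
      have hmem : f (Monoid.CoprodI.of (M := fun _ : ZMod (s+1) => G₁) (i := i) gg) ∈
          MonoidHom.range (Monoid.CoprodI.of (M := fun _ : ZMod (s+1) => G₁) (i := i + 1)) := by
        rw [← hf i]
        exact ⟨_, ⟨gg, rfl⟩, rfl⟩
      obtain ⟨g', hg'⟩ := hmem
      have hL : T (Pi.mulSingle i ((Abelianization.of : G₁ →* B) gg)) =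
          Pi.mulSingle (i+1) (Abelianization.of g') := by
        rw [hTdef]
        simp only [MonoidHom.coe_comp, Function.comp_apply]
        rw [lemB, Abelianization.map_of, hF, Abelianization.map_of]
        have : f.toMonoidHom (Monoid.CoprodI.of (M := fun _ : ZMod (s+1) => G₁) (i := i) gg)
            = Monoid.CoprodI.of (M := fun _ : ZMod (s+1) => G₁) (i := i+1) g' := hg'.symm
        rw [this, lemA]
      rw [MonoidHom.mulSingle_apply, hL]
      have hgval : g i ((Abelianization.of : G₁ →* B) gg) = Abelianization.of g' := by
        rw [hgdef]
        simp only [MonoidHom.coe_comp, Function.comp_apply, MonoidHom.mulSingle_apply,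
          Pi.evalMonoidHom_apply]
        rw [hL, Pi.mulSingle_eq_same]
      rw [hgval]
      rfl
    have := DFunLike.congr_fun hh b
    simpa using this
  have hT : ∀ (x : ZMod (s+1) → B) (j : ZMod (s+1)), T x j = g (j-1) (x (j-1)) := by
    intro x j
    conv_lhs => rw [← Finset.univ_prod_mulSingle x]
    rw [map_prod]
    simp only [hTsingle]
    rw [Finset.prod_apply]
    rw [Fintype.prod_eq_single (j-1)]
    · rw [sub_add_cancel, Pi.mulSingle_eq_same]
    · intro i hi
      apply Pi.mulSingle_eq_of_ne
      intro h
      exact hi (by rw [h]; ring)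
  -- the relation Gcomp g (s+1) = Abelianization.map φ
  have hpow : ∀ (n : ℕ) (x : GG), ((f ^ (n+1)) : MulAut GG) x = f (((f ^ n) : MulAut GG) x) := by
    intro n x
    rw [pow_succ']
    rfl
  have hiter : ∀ (n : ℕ) (gg : G₁),
      toP (Abelianization.of (((f ^ n) : MulAut GG)
        (Monoid.CoprodI.of (M := fun _ : ZMod (s+1) => G₁) (i := (0 : ZMod (s+1))) gg))) =
      Pi.mulSingle ((n : ℕ) : ZMod (s+1)) (Gcomp g n (Abelianization.of gg)) := by
    intro n
    induction n with
    | zero =>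
      intro gg
      simp only [pow_zero]
      rw [show ((1 : MulAut GG)
        (Monoid.CoprodI.of (M := fun _ : ZMod (s+1) => G₁) (i := (0 : ZMod (s+1))) gg)) =
        Monoid.CoprodI.of (M := fun _ : ZMod (s+1) => G₁) (i := (0 : ZMod (s+1))) gg from rfl]
      rw [lemA]
      norm_num
      rfl
    | succ n ih =>
      intro gg
      rw [hpow]
      set y := ((f ^ n) : MulAut GG)
        (Monoid.CoprodI.of (M := fun _ : ZMod (s+1) => G₁) (i := (0 : ZMod (s+1))) gg) with hy
      have h1 : toP (Abelianization.of (f y)) = T (toP (Abelianization.of y)) := by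
        rw [hTdef]
        simp only [MonoidHom.coe_comp, Function.comp_apply]
        rw [invAP, hF, Abelianization.map_of]
        rfl
      rw [h1, ih gg, hTsingle]
      have hcast : ((n : ℕ) : ZMod (s+1)) + 1 = ((n+1 : ℕ) : ZMod (s+1)) := by push_cast; ring
      rw [hcast]
      rfl
  have hGr : Gcomp g (s+1) = (Abelianization.map φ.toMonoidHom : B →* B) := by
    apply Abelianization.hom_ext
    ext gg
    simp only [MonoidHom.coe_comp, Function.comp_apply]
    have h1 := hiter (s+1) gg
    rw [hφ gg, lemA, ZMod.natCast_self] at h1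
    have h2 := congrFun h1 0
    rw [Pi.mulSingle_eq_same, Pi.mulSingle_eq_same] at h2
    rw [Abelianization.map_of, ← h2]
    rfl
  -- conjugation by the equivalence
  set e : A ≃* (ZMod (s+1) → B) := MonoidHom.toMulEquiv toP toA
    (by apply Abelianization.hom_ext; apply Monoid.CoprodI.ext_hom; intro i; ext gg
        simp only [MonoidHom.coe_comp, Function.comp_apply, MonoidHom.id_apply]
        exact invAP _)
    (by apply MonoidHom.functions_ext; intro i b
        simp only [MonoidHom.coe_comp, Function.comp_apply, MonoidHom.id_apply]
        exact invPA _) with he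
  have heq : (fun x : ZMod (s+1) → B => T x * x⁻¹) =
      ⇑e.toEquiv ∘ (fun a : A => F a * a⁻¹) ∘ ⇑e.toEquiv.symm := by
    funext x
    simp only [Function.comp_apply]
    have h1 : (e.toEquiv.symm x : A) = toA x := rfl
    have h2 : ∀ a : A, e.toEquiv a = toP a := fun _ => rfl
    rw [h1, h2, map_mul, map_inv, invPA]
    rfl
  have key := core_lemma s g T hT
  rw [heq, conj_bij] at key
  rw [hGr] at key
  exact key
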